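/- For every integer n ≥ 1 with n ≠ 2, every transposed Poisson structure on the Schrödinger algebra S_n is trivial: any commutative associative multiplication · on S_n such that (S_n, ·, [·,·]) is a transposed Poisson algebra satisfies x·y = 0 for all x, y ∈ S_n. -/

import Mathlib

noncomputable section

open Submodule

/-- Index type for the standard basis
`{e, f, h, z, x_i, y_i (1 ≤ i ≤ n), s_{jk} (1 ≤ j < k ≤ n)}`
of the Schrödinger algebra `S_n` (indices shifted to start from `0`). -/
inductive SIdx (n : ℕ) : Type where
  | E : SIdx n
  | F : SIdx n
  | H : SIdx n
  | Z : SIdx n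
  | X : Fin n → SIdx n
  | Y : Fin n → SIdx n
  | S : (j k : Fin n) → j < k → SIdx n

/-- Kronecker delta with values in `ℂ`. -/
def kd {n : ℕ} (i j : Fin n) : ℂ := if i = j then 1 else 0

variable {n : ℕ} {L : Type*} [LieRing L] [LieAlgebra ℂ L]

/-- The element `s_{jk}` for arbitrary indices, with the convention
`s_{kj} = -s_{jk}` and `s_{jj} = 0`. -/
def sg (b : Module.Basis (SIdx n) ℂ L) (j k : Fin n) : L :=
  if h : j < k then b (.S j k h)
  else if h' : k < j then - b (.S k j h')
  else 0

/-- A basis of a complex Lie algebra indexed by `SIdx n` realizes the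
Schrödinger algebra `S_n` if the brackets of basis vectors are as follows
(all brackets of basis vectors not determined by the relations below and
anticommutativity are zero). -/
structure IsSchrodinger (b : Module.Basis (SIdx n) ℂ L) : Prop where
  lie_e_f : ⁅b .E, b .F⁆ = b .H
  lie_h_e : ⁅b .H, b .E⁆ = (2 : ℂ) • b .E
  lie_f_h : ⁅b .F, b .H⁆ = (2 : ℂ) • b .F
  lie_x_y : ∀ i j, ⁅b (.X i), b (.Y j)⁆ = kd i j • b .Z
  lie_x_x : ∀ i j, ⁅b (.X i), b (.X j)⁆ = 0
  lie_y_y : ∀ i j, ⁅b (.Y i), b (.Y j)⁆ = 0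
  lie_h_x : ∀ i, ⁅b .H, b (.X i)⁆ = b (.X i)
  lie_h_y : ∀ i, ⁅b .H, b (.Y i)⁆ = - b (.Y i)
  lie_e_y : ∀ i, ⁅b .E, b (.Y i)⁆ = b (.X i)
  lie_e_x : ∀ i, ⁅b .E, b (.X i)⁆ = 0
  lie_f_x : ∀ i, ⁅b .F, b (.X i)⁆ = b (.Y i)
  lie_f_y : ∀ i, ⁅b .F, b (.Y i)⁆ = 0
  lie_z : ∀ u : SIdx n, ⁅b .Z, b u⁆ = 0
  lie_s_x : ∀ j k i, ⁅sg b j k, b (.X i)⁆ = kd k i • b (.X j) - kd j i • b (.X k)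
  lie_s_y : ∀ j k i, ⁅sg b j k, b (.Y i)⁆ = kd k i • b (.Y j) - kd j i • b (.Y k)
  lie_s_s : ∀ j k l m, ⁅sg b j k, sg b l m⁆ =
      kd l k • sg b j m + kd j m • sg b k l + kd m k • sg b l j + kd l j • sg b m k
  lie_e_s : ∀ j k, ⁅b .E, sg b j k⁆ = 0
  lie_f_s : ∀ j k, ⁅b .F, sg b j k⁆ = 0
  lie_h_s : ∀ j k, ⁅b .H, sg b j k⁆ = 0

/-- A `1/2`-derivation of a complex Lie algebra: a linear map `φ` with
`φ([x,y]) = (1/2)([φ(x),y] + [x,φ(y)])`. -/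
def IsHalfDeriv (φ : L →ₗ[ℂ] L) : Prop :=
  ∀ x y : L, φ ⁅x, y⁆ = (2⁻¹ : ℂ) • (⁅φ x, y⁆ + ⁅x, φ y⁆)

/-- The set of basis vectors spanning the even part `(S_n)₀`:
`{e, f, h, z, s_{kl}}`. -/
def evenSet (b : Module.Basis (SIdx n) ℂ L) : Set L :=
  {v | v = b .E ∨ v = b .F ∨ v = b .H ∨ v = b .Z ∨ ∃ j k, ∃ h : j < k, v = b (.S j k h)}

/-- The set of basis vectors spanning the odd part `(S_n)₁`: `{x_i, y_i}`. -/
def oddSet (b : Module.Basis (SIdx n) ℂ L) : Set L :=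
  {v | ∃ i : Fin n, v = b (.X i) ∨ v = b (.Y i)}


section Aux

variable (b : Module.Basis (SIdx n) ℂ L)

/-- eigenvalue of `ad h` on basis vectors -/
def Dg : SIdx n → ℂ
  | .E => 2
  | .F => -2
  | .X _ => 1
  | .Y _ => -1
  | _ => 0

lemma funl_ext (f g : L →ₗ[ℂ] ℂ) (h : ∀ i, f (b i) = g (b i)) (v : L) : f v = g v := by
  rw [b.ext h]

lemma sg_eq {j k : Fin n} (h : j < k) : sg b j k = b (.S j k h) := dif_pos h

lemma sg_swap {j k : Fin n} (h : k < j) : sg b j k = - b (.S k j h) := by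
  unfold sg; rw [dif_neg (lt_asymm h), dif_pos h]

lemma sg_diag (j : Fin n) : sg b j j = 0 := by
  unfold sg; rw [dif_neg (lt_irrefl j), dif_neg (lt_irrefl j)]

lemma kd_self (i : Fin n) : kd i i = 1 := if_pos rfl
lemma kd_ne {i j : Fin n} (h : i ≠ j) : kd i j = 0 := if_neg h

variable (hb : IsSchrodinger b)
include hb

-- bracket table
lemma bHF : ⁅b .H, b .F⁆ = (-2 : ℂ) • b .F := by
  rw [← lie_skew, hb.lie_f_h]; module
lemma bHH : ⁅b .H, b .H⁆ = 0 := lie_self _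
lemma bHZ : ⁅b .H, b .Z⁆ = 0 := by rw [← lie_skew, hb.lie_z, neg_zero]
lemma bHS (j k : Fin n) (h : j < k) : ⁅b .H, b (.S j k h)⁆ = 0 := by
  rw [← sg_eq b h, hb.lie_h_s]

lemma bEE : ⁅b .E, b .E⁆ = 0 := lie_self _
lemma bEH : ⁅b .E, b .H⁆ = (-2 : ℂ) • b .E := by
  rw [← lie_skew, hb.lie_h_e]; module
lemma bEZ : ⁅b .E, b .Z⁆ = 0 := by rw [← lie_skew, hb.lie_z, neg_zero]
lemma bES (j k : Fin n) (h : j < k) : ⁅b .E, b (.S j k h)⁆ = 0 := by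
  rw [← sg_eq b h, hb.lie_e_s]

lemma bFE : ⁅b .F, b .E⁆ = - b .H := by rw [← lie_skew, hb.lie_e_f]
lemma bFF : ⁅b .F, b .F⁆ = 0 := lie_self _
lemma bFZ : ⁅b .F, b .Z⁆ = 0 := by rw [← lie_skew, hb.lie_z, neg_zero]
lemma bFS (j k : Fin n) (h : j < k) : ⁅b .F, b (.S j k h)⁆ = 0 := by
  rw [← sg_eq b h, hb.lie_f_s]

lemma bXE (j : Fin n) : ⁅b (.X j), b .E⁆ = 0 := by
  rw [← lie_skew, hb.lie_e_x, neg_zero]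
lemma bXF (j : Fin n) : ⁅b (.X j), b .F⁆ = - b (.Y j) := by
  rw [← lie_skew, hb.lie_f_x]
lemma bXH (j : Fin n) : ⁅b (.X j), b .H⁆ = - b (.X j) := by
  rw [← lie_skew, hb.lie_h_x]
lemma bXZ (j : Fin n) : ⁅b (.X j), b .Z⁆ = 0 := by
  rw [← lie_skew, hb.lie_z, neg_zero]
lemma bXS (j l m : Fin n) (h : l < m) :
    ⁅b (.X j), b (.S l m h)⁆ = kd l j • b (.X m) - kd m j • b (.X l) := by
  rw [← lie_skew, ← sg_eq b h, hb.lie_s_x]; module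

lemma zSg (l m : Fin n) : ⁅b .Z, sg b l m⁆ = 0 := by
  rcases lt_trichotomy l m with h | h | h
  · rw [sg_eq b h, hb.lie_z]
  · subst h; rw [sg_diag, lie_zero]
  · rw [sg_swap b h, lie_neg, hb.lie_z, neg_zero]

lemma sgZ (l m : Fin n) : ⁅sg b l m, b .Z⁆ = 0 := by
  rw [← lie_skew, zSg b hb, neg_zero]


set_option linter.unusedSectionVars false

set_option maxHeartbeats 1000000

instance : DecidableEq (SIdx n) := Classical.decEq _

lemma RH (u : SIdx n) (v : L) : b.repr ⁅b .H, v⁆ u = Dg u * b.repr v u := by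
  have h : ((b.coord u).comp ((LieAlgebra.ad ℂ L) (b .H))) v = (Dg u • b.coord u) v := by
    refine funl_ext b _ _ (fun i => ?_) v
    rcases i with _|_|_|_|i|i|⟨j,k,hjk⟩ <;> rcases u with _|_|_|_|u|u|⟨l,m,hlm⟩ <;>
      simp [LieAlgebra.ad_apply, hb.lie_h_e, bHF b hb, bHH b, bHZ b hb, hb.lie_h_x,
        hb.lie_h_y, bHS b hb, Module.Basis.coord_apply, Module.Basis.repr_self, Finsupp.single_apply, Dg]
  simpa [Module.Basis.coord_apply, smul_eq_mul] using h

lemma RE_H (v : L) : b.repr ⁅b .E, v⁆ .H = b.repr v .F := by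
  have h : ((b.coord .H).comp ((LieAlgebra.ad ℂ L) (b .E))) v = (b.coord .F) v := by
    refine funl_ext b _ _ (fun i => ?_) v
    rcases i with _|_|_|_|i|i|⟨j,k,hjk⟩ <;>
      simp [LieAlgebra.ad_apply, hb.lie_e_f, bEE b, bEH b hb, bEZ b hb, hb.lie_e_x,
        hb.lie_e_y, bES b hb, Module.Basis.coord_apply, Module.Basis.repr_self, Finsupp.single_apply]
  simpa [Module.Basis.coord_apply] using h

lemma RE_E (v : L) : b.repr ⁅b .E, v⁆ .E = -2 * b.repr v .H := by
  have h : ((b.coord .E).comp ((LieAlgebra.ad ℂ L) (b .E))) v = ((-2 : ℂ) • b.coord .H) v := by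
    refine funl_ext b _ _ (fun i => ?_) v
    rcases i with _|_|_|_|i|i|⟨j,k,hjk⟩ <;>
      simp [LieAlgebra.ad_apply, hb.lie_e_f, bEE b, bEH b hb, bEZ b hb, hb.lie_e_x,
        hb.lie_e_y, bES b hb, Module.Basis.coord_apply, Module.Basis.repr_self, Finsupp.single_apply]
  simpa [Module.Basis.coord_apply, smul_eq_mul] using h

lemma RE_X (i0 : Fin n) (v : L) : b.repr ⁅b .E, v⁆ (.X i0) = b.repr v (.Y i0) := by
  have h : ((b.coord (.X i0)).comp ((LieAlgebra.ad ℂ L) (b .E))) v = (b.coord (.Y i0)) v := by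
    refine funl_ext b _ _ (fun i => ?_) v
    rcases i with _|_|_|_|i|i|⟨j,k,hjk⟩ <;>
      simp [LieAlgebra.ad_apply, hb.lie_e_f, bEE b, bEH b hb, bEZ b hb, hb.lie_e_x,
        hb.lie_e_y, bES b hb, Module.Basis.coord_apply, Module.Basis.repr_self, Finsupp.single_apply]
  simpa [Module.Basis.coord_apply] using h

lemma RE_F (v : L) : b.repr ⁅b .E, v⁆ .F = 0 := by
  have h : ((b.coord .F).comp ((LieAlgebra.ad ℂ L) (b .E))) v = (0 : L →ₗ[ℂ] ℂ) v := by
    refine funl_ext b _ _ (fun i => ?_) v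
    rcases i with _|_|_|_|i|i|⟨j,k,hjk⟩ <;>
      simp [LieAlgebra.ad_apply, hb.lie_e_f, bEE b, bEH b hb, bEZ b hb, hb.lie_e_x,
        hb.lie_e_y, bES b hb, Module.Basis.coord_apply, Module.Basis.repr_self, Finsupp.single_apply]
  simpa [Module.Basis.coord_apply] using h

lemma RE_Z (v : L) : b.repr ⁅b .E, v⁆ .Z = 0 := by
  have h : ((b.coord .Z).comp ((LieAlgebra.ad ℂ L) (b .E))) v = (0 : L →ₗ[ℂ] ℂ) v := by
    refine funl_ext b _ _ (fun i => ?_) v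
    rcases i with _|_|_|_|i|i|⟨j,k,hjk⟩ <;>
      simp [LieAlgebra.ad_apply, hb.lie_e_f, bEE b, bEH b hb, bEZ b hb, hb.lie_e_x,
        hb.lie_e_y, bES b hb, Module.Basis.coord_apply, Module.Basis.repr_self, Finsupp.single_apply]
  simpa [Module.Basis.coord_apply] using h

lemma RE_Y (i0 : Fin n) (v : L) : b.repr ⁅b .E, v⁆ (.Y i0) = 0 := by
  have h : ((b.coord (.Y i0)).comp ((LieAlgebra.ad ℂ L) (b .E))) v = (0 : L →ₗ[ℂ] ℂ) v := by
    refine funl_ext b _ _ (fun i => ?_) v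
    rcases i with _|_|_|_|i|i|⟨j,k,hjk⟩ <;>
      simp [LieAlgebra.ad_apply, hb.lie_e_f, bEE b, bEH b hb, bEZ b hb, hb.lie_e_x,
        hb.lie_e_y, bES b hb, Module.Basis.coord_apply, Module.Basis.repr_self, Finsupp.single_apply]
  simpa [Module.Basis.coord_apply] using h

lemma RE_S (l m : Fin n) (hlm : l < m) (v : L) : b.repr ⁅b .E, v⁆ (.S l m hlm) = 0 := by
  have h : ((b.coord (.S l m hlm)).comp ((LieAlgebra.ad ℂ L) (b .E))) v = (0 : L →ₗ[ℂ] ℂ) v := by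
    refine funl_ext b _ _ (fun i => ?_) v
    rcases i with _|_|_|_|i|i|⟨j,k,hjk⟩ <;>
      simp [LieAlgebra.ad_apply, hb.lie_e_f, bEE b, bEH b hb, bEZ b hb, hb.lie_e_x,
        hb.lie_e_y, bES b hb, Module.Basis.coord_apply, Module.Basis.repr_self, Finsupp.single_apply]
  simpa [Module.Basis.coord_apply] using h

lemma RF_H (v : L) : b.repr ⁅b .F, v⁆ .H = - b.repr v .E := by
  have h : ((b.coord .H).comp ((LieAlgebra.ad ℂ L) (b .F))) v = (- b.coord .E) v := by
    refine funl_ext b _ _ (fun i => ?_) v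
    rcases i with _|_|_|_|i|i|⟨j,k,hjk⟩ <;>
      simp [LieAlgebra.ad_apply, bFE b hb, bFF b, hb.lie_f_h, bFZ b hb, hb.lie_f_x,
        hb.lie_f_y, bFS b hb, Module.Basis.coord_apply, Module.Basis.repr_self, Finsupp.single_apply]
  simpa [Module.Basis.coord_apply] using h

lemma RF_F (v : L) : b.repr ⁅b .F, v⁆ .F = 2 * b.repr v .H := by
  have h : ((b.coord .F).comp ((LieAlgebra.ad ℂ L) (b .F))) v = ((2 : ℂ) • b.coord .H) v := by
    refine funl_ext b _ _ (fun i => ?_) v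
    rcases i with _|_|_|_|i|i|⟨j,k,hjk⟩ <;>
      simp [LieAlgebra.ad_apply, bFE b hb, bFF b, hb.lie_f_h, bFZ b hb, hb.lie_f_x,
        hb.lie_f_y, bFS b hb, Module.Basis.coord_apply, Module.Basis.repr_self, Finsupp.single_apply]
  simpa [Module.Basis.coord_apply, smul_eq_mul] using h

lemma RF_Y (i0 : Fin n) (v : L) : b.repr ⁅b .F, v⁆ (.Y i0) = b.repr v (.X i0) := by
  have h : ((b.coord (.Y i0)).comp ((LieAlgebra.ad ℂ L) (b .F))) v = (b.coord (.X i0)) v := by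
    refine funl_ext b _ _ (fun i => ?_) v
    rcases i with _|_|_|_|i|i|⟨j,k,hjk⟩ <;>
      simp [LieAlgebra.ad_apply, bFE b hb, bFF b, hb.lie_f_h, bFZ b hb, hb.lie_f_x,
        hb.lie_f_y, bFS b hb, Module.Basis.coord_apply, Module.Basis.repr_self, Finsupp.single_apply]
  simpa [Module.Basis.coord_apply] using h

lemma RF_E (v : L) : b.repr ⁅b .F, v⁆ .E = 0 := by
  have h : ((b.coord .E).comp ((LieAlgebra.ad ℂ L) (b .F))) v = (0 : L →ₗ[ℂ] ℂ) v := by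
    refine funl_ext b _ _ (fun i => ?_) v
    rcases i with _|_|_|_|i|i|⟨j,k,hjk⟩ <;>
      simp [LieAlgebra.ad_apply, bFE b hb, bFF b, hb.lie_f_h, bFZ b hb, hb.lie_f_x,
        hb.lie_f_y, bFS b hb, Module.Basis.coord_apply, Module.Basis.repr_self, Finsupp.single_apply]
  simpa [Module.Basis.coord_apply] using h

lemma RF_Z (v : L) : b.repr ⁅b .F, v⁆ .Z = 0 := by
  have h : ((b.coord .Z).comp ((LieAlgebra.ad ℂ L) (b .F))) v = (0 : L →ₗ[ℂ] ℂ) v := by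
    refine funl_ext b _ _ (fun i => ?_) v
    rcases i with _|_|_|_|i|i|⟨j,k,hjk⟩ <;>
      simp [LieAlgebra.ad_apply, bFE b hb, bFF b, hb.lie_f_h, bFZ b hb, hb.lie_f_x,
        hb.lie_f_y, bFS b hb, Module.Basis.coord_apply, Module.Basis.repr_self, Finsupp.single_apply]
  simpa [Module.Basis.coord_apply] using h

lemma RF_X (i0 : Fin n) (v : L) : b.repr ⁅b .F, v⁆ (.X i0) = 0 := by
  have h : ((b.coord (.X i0)).comp ((LieAlgebra.ad ℂ L) (b .F))) v = (0 : L →ₗ[ℂ] ℂ) v := by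
    refine funl_ext b _ _ (fun i => ?_) v
    rcases i with _|_|_|_|i|i|⟨j,k,hjk⟩ <;>
      simp [LieAlgebra.ad_apply, bFE b hb, bFF b, hb.lie_f_h, bFZ b hb, hb.lie_f_x,
        hb.lie_f_y, bFS b hb, Module.Basis.coord_apply, Module.Basis.repr_self, Finsupp.single_apply]
  simpa [Module.Basis.coord_apply] using h

lemma RF_S (l m : Fin n) (hlm : l < m) (v : L) : b.repr ⁅b .F, v⁆ (.S l m hlm) = 0 := by
  have h : ((b.coord (.S l m hlm)).comp ((LieAlgebra.ad ℂ L) (b .F))) v = (0 : L →ₗ[ℂ] ℂ) v := by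
    refine funl_ext b _ _ (fun i => ?_) v
    rcases i with _|_|_|_|i|i|⟨j,k,hjk⟩ <;>
      simp [LieAlgebra.ad_apply, bFE b hb, bFF b, hb.lie_f_h, bFZ b hb, hb.lie_f_x,
        hb.lie_f_y, bFS b hb, Module.Basis.coord_apply, Module.Basis.repr_self, Finsupp.single_apply]
  simpa [Module.Basis.coord_apply] using h

lemma RXS (j k : Fin n) (hjk : j < k) (v : L) :
    b.repr ⁅b (.X j), v⁆ (.X k) = b.repr v (.S j k hjk) := by
  have h : ((b.coord (.X k)).comp ((LieAlgebra.ad ℂ L) (b (.X j)))) v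
      = (b.coord (.S j k hjk)) v := by
    refine funl_ext b _ _ (fun i => ?_) v
    have hjkne : j ≠ k := Fin.ne_of_lt hjk
    rcases i with _|_|_|_|i|i|⟨l,m,hlm⟩
    · simp [LieAlgebra.ad_apply, bXE b hb, Module.Basis.coord_apply, Module.Basis.repr_self,
        Finsupp.single_apply]
    · simp [LieAlgebra.ad_apply, bXF b hb, Module.Basis.coord_apply, Module.Basis.repr_self,
        Finsupp.single_apply]
    · simp [LieAlgebra.ad_apply, bXH b hb, Module.Basis.coord_apply, Module.Basis.repr_self,
        Finsupp.single_apply, hjkne]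
    · simp [LieAlgebra.ad_apply, bXZ b hb, Module.Basis.coord_apply, Module.Basis.repr_self,
        Finsupp.single_apply]
    · simp [LieAlgebra.ad_apply, hb.lie_x_x, Module.Basis.coord_apply, Module.Basis.repr_self,
        Finsupp.single_apply]
    · simp [LieAlgebra.ad_apply, hb.lie_x_y, Module.Basis.coord_apply, Module.Basis.repr_self,
        Finsupp.single_apply]
    · -- i = S l m hlm
      by_cases h1 : l = j ∧ m = k
      · obtain ⟨rfl, rfl⟩ := h1
        have : (SIdx.S l m hlm : SIdx n) = .S l m hjk := rfl
        simp [LieAlgebra.ad_apply, bXS b hb, Module.Basis.coord_apply, Module.Basis.repr_self,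
          Finsupp.single_apply, kd_self, kd_ne hjkne.symm, hjkne]
      · have hne : (SIdx.S l m hlm : SIdx n) ≠ .S j k hjk := by
          intro he; injection he with h2 h3; exact h1 ⟨h2, h3⟩
        have hnc : ¬ (m = j ∧ l = k) := by
          rintro ⟨rfl, rfl⟩; exact absurd (hjk.trans hlm) (lt_irrefl _)
        simp only [LieAlgebra.ad_apply, LinearMap.comp_apply, bXS b hb,
          Module.Basis.coord_apply, map_sub, map_smul, Module.Basis.repr_self, Finsupp.sub_apply,
          Finsupp.smul_apply, smul_eq_mul, Finsupp.single_apply, kd]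
        rw [if_neg hne]
        by_cases h2 : l = j
        · have h3 : m ≠ k := fun hm => h1 ⟨h2, hm⟩
          simp [h2, h3, hjkne]
        · by_cases h4 : m = j
          · have h5 : l ≠ k := fun hl => hnc ⟨h4, hl⟩
            simp [h2, h4, h5]
          · simp [h2, h4]
  simpa [Module.Basis.coord_apply] using h

lemma coords_zero (v : L) (h : ∀ u, b.repr v u = 0) : v = 0 := by
  have h2 : b.repr v = 0 := Finsupp.ext fun u => h u
  simpa using (LinearEquiv.map_eq_zero_iff b.repr).mp h2

lemma cent (v : L) (he : ⁅b .E, v⁆ = 0) (hf : ⁅b .F, v⁆ = 0)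
    (hx : ∀ j, ⁅b (.X j), v⁆ = 0) : v = b.repr v .Z • b .Z := by
  have hvE : b.repr v .E = 0 := by
    have h := RF_H b hb v; rw [hf] at h
    simp only [map_zero, Finsupp.zero_apply] at h; linear_combination h
  have hvF : b.repr v .F = 0 := by
    have h := RE_H b hb v; rw [he] at h
    simp only [map_zero, Finsupp.zero_apply] at h; linear_combination -h
  have hvH : b.repr v .H = 0 := by
    have h := RE_E b hb v; rw [he] at h
    simp only [map_zero, Finsupp.zero_apply] at h; linear_combination h / 2
  have hvX : ∀ i, b.repr v (.X i) = 0 := by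
    intro i; have h := RF_Y b hb i v; rw [hf] at h
    simp only [map_zero, Finsupp.zero_apply] at h; linear_combination -h
  have hvY : ∀ i, b.repr v (.Y i) = 0 := by
    intro i; have h := RE_X b hb i v; rw [he] at h
    simp only [map_zero, Finsupp.zero_apply] at h; linear_combination -h
  have hvS : ∀ j k (hjk : j < k), b.repr v (.S j k hjk) = 0 := by
    intro j k hjk; have h := RXS b hb j k hjk v; rw [hx j] at h
    simp only [map_zero, Finsupp.zero_apply] at h; linear_combination -h
  have key : ∀ u, b.repr (v - b.repr v .Z • b .Z) u = 0 := by
    intro u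
    rcases u with _|_|_|_|i|i|⟨j,k,hjk⟩ <;>
      simp [map_sub, map_smul, Finsupp.sub_apply, Finsupp.smul_apply,
        Module.Basis.repr_self, Finsupp.single_apply, hvE, hvF, hvH, hvX, hvY, hvS]
  exact sub_eq_zero.mp (coords_zero b hb _ key)

lemma half_deriv_struct (hn : 1 ≤ n) (ψ : L →ₗ[ℂ] L)
    (hψ : ∀ x y : L, (2 : ℂ) • ψ ⁅x, y⁆ = ⁅ψ x, y⁆ + ⁅x, ψ y⁆) :
    ψ (b .E) = b.repr (ψ (b .H)) .H • b .E ∧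
    ψ (b .F) = b.repr (ψ (b .H)) .H • b .F ∧
    ψ (b .H) = b.repr (ψ (b .H)) .H • b .H ∧
    ψ (b .Z) = b.repr (ψ (b .H)) .H • b .Z ∧
    (∀ i, ψ (b (.X i)) = b.repr (ψ (b .H)) .H • b (.X i)) ∧
    (∀ i, ψ (b (.Y i)) = b.repr (ψ (b .H)) .H • b (.Y i)) := by
  set lam := b.repr (ψ (b .H)) .H with hlam
  have keyA : ∀ u, (4 : ℂ) * b.repr (ψ (b .E)) u
      = -(b.repr ⁅b .E, ψ (b .H)⁆ u) + Dg u * b.repr (ψ (b .E)) u := by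
    intro u
    have h0 := hψ (b .H) (b .E)
    rw [hb.lie_h_e, map_smul, ← lie_skew (ψ (b .H)) (b .E)] at h0
    have h1 := congrArg (fun t => b.repr t u) h0
    simp only [map_smul, map_add, map_neg, Finsupp.smul_apply, Finsupp.add_apply,
      Finsupp.neg_apply, smul_eq_mul] at h1
    rw [RH b hb u] at h1
    linear_combination h1
  have keyB : ∀ u, (4 : ℂ) * b.repr (ψ (b .F)) u
      = -(Dg u * b.repr (ψ (b .F)) u) + b.repr ⁅b .F, ψ (b .H)⁆ u := by
    intro u
    have h0 := hψ (b .F) (b .H)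
    rw [hb.lie_f_h, map_smul, ← lie_skew (ψ (b .F)) (b .H)] at h0
    have h1 := congrArg (fun t => b.repr t u) h0
    simp only [map_smul, map_add, map_neg, Finsupp.smul_apply, Finsupp.add_apply,
      Finsupp.neg_apply, smul_eq_mul] at h1
    rw [RH b hb u] at h1
    linear_combination h1
  have keyC : ∀ u, (2 : ℂ) * b.repr (ψ (b .H)) u
      = -(b.repr ⁅b .F, ψ (b .E)⁆ u) + b.repr ⁅b .E, ψ (b .F)⁆ u := by
    intro u
    have h0 := hψ (b .E) (b .F)
    rw [hb.lie_e_f, ← lie_skew (ψ (b .E)) (b .F)] at h0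
    have h1 := congrArg (fun t => b.repr t u) h0
    simp only [map_smul, map_add, map_neg, Finsupp.smul_apply, Finsupp.add_apply,
      Finsupp.neg_apply, smul_eq_mul] at h1
    linear_combination h1
  -- coordinates of ψ e
  have hEF : b.repr (ψ (b .E)) .F = 0 := by
    have h := keyA .F; rw [RE_F b hb] at h
    rw [show Dg (SIdx.F : SIdx n) = -2 from rfl] at h; linear_combination h / 6
  have hEZ : b.repr (ψ (b .E)) .Z = 0 := by
    have h := keyA .Z; rw [RE_Z b hb] at h
    rw [show Dg (SIdx.Z : SIdx n) = 0 from rfl] at h; linear_combination h / 4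
  have hES : ∀ j k (hjk : j < k), b.repr (ψ (b .E)) (.S j k hjk) = 0 := by
    intro j k hjk
    have h := keyA (.S j k hjk); rw [RE_S b hb] at h
    rw [show Dg (SIdx.S j k hjk : SIdx n) = 0 from rfl] at h; linear_combination h / 4
  have hEY : ∀ i, b.repr (ψ (b .E)) (.Y i) = 0 := by
    intro i
    have h := keyA (.Y i); rw [RE_Y b hb] at h
    rw [show Dg (SIdx.Y i : SIdx n) = -1 from rfl] at h; linear_combination h / 5
  have hEE : b.repr (ψ (b .E)) .E = lam := by
    have h := keyA .E; rw [RE_E b hb] at h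
    rw [show Dg (SIdx.E : SIdx n) = 2 from rfl] at h; linear_combination h / 2
  have hEH' := keyA .H
  rw [RE_H b hb, show Dg (SIdx.H : SIdx n) = 0 from rfl] at hEH'
  have hEX' : ∀ i, (3 : ℂ) * b.repr (ψ (b .E)) (.X i) = -(b.repr (ψ (b .H)) (.Y i)) := by
    intro i
    have h := keyA (.X i); rw [RE_X b hb] at h
    rw [show Dg (SIdx.X i : SIdx n) = 1 from rfl] at h; linear_combination h
  -- coordinates of ψ f
  have hFE : b.repr (ψ (b .F)) .E = 0 := by
    have h := keyB .E; rw [RF_E b hb] at h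
    rw [show Dg (SIdx.E : SIdx n) = 2 from rfl] at h; linear_combination h / 6
  have hFZ : b.repr (ψ (b .F)) .Z = 0 := by
    have h := keyB .Z; rw [RF_Z b hb] at h
    rw [show Dg (SIdx.Z : SIdx n) = 0 from rfl] at h; linear_combination h / 4
  have hFS : ∀ j k (hjk : j < k), b.repr (ψ (b .F)) (.S j k hjk) = 0 := by
    intro j k hjk
    have h := keyB (.S j k hjk); rw [RF_S b hb] at h
    rw [show Dg (SIdx.S j k hjk : SIdx n) = 0 from rfl] at h; linear_combination h / 4
  have hFX : ∀ i, b.repr (ψ (b .F)) (.X i) = 0 := by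
    intro i
    have h := keyB (.X i); rw [RF_X b hb] at h
    rw [show Dg (SIdx.X i : SIdx n) = 1 from rfl] at h; linear_combination h / 5
  have hFF : b.repr (ψ (b .F)) .F = lam := by
    have h := keyB .F; rw [RF_F b hb] at h
    rw [show Dg (SIdx.F : SIdx n) = -2 from rfl] at h; linear_combination h / 2
  have hFH' := keyB .H
  rw [RF_H b hb, show Dg (SIdx.H : SIdx n) = 0 from rfl] at hFH'
  have hFY' : ∀ i, (3 : ℂ) * b.repr (ψ (b .F)) (.Y i) = b.repr (ψ (b .H)) (.X i) := by
    intro i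
    have h := keyB (.Y i); rw [RF_Y b hb] at h
    rw [show Dg (SIdx.Y i : SIdx n) = -1 from rfl] at h; linear_combination h
  -- coordinates of ψ h
  have hHE : b.repr (ψ (b .H)) .E = 0 := by
    have h := keyC .E; rw [RF_E b hb, RE_E b hb] at h
    linear_combination (2 / 3 : ℂ) * h - (1 / 3 : ℂ) * hFH'
  have hHF : b.repr (ψ (b .H)) .F = 0 := by
    have h := keyC .F; rw [RF_F b hb, RE_F b hb] at h
    linear_combination (2 / 3 : ℂ) * h - (1 / 3 : ℂ) * hEH'
  have hHZ : b.repr (ψ (b .H)) .Z = 0 := by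
    have h := keyC .Z; rw [RF_Z b hb, RE_Z b hb] at h; linear_combination h / 2
  have hHS : ∀ j k (hjk : j < k), b.repr (ψ (b .H)) (.S j k hjk) = 0 := by
    intro j k hjk
    have h := keyC (.S j k hjk); rw [RF_S b hb, RE_S b hb] at h; linear_combination h / 2
  have hHX : ∀ i, b.repr (ψ (b .H)) (.X i) = 0 := by
    intro i
    have h := keyC (.X i); rw [RF_X b hb, RE_X b hb] at h
    linear_combination (3 / 5 : ℂ) * h + (1 / 5 : ℂ) * hFY' i
  have hHY : ∀ i, b.repr (ψ (b .H)) (.Y i) = 0 := by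
    intro i
    have h := keyC (.Y i); rw [RF_Y b hb, RE_Y b hb] at h
    linear_combination (3 / 5 : ℂ) * h - (1 / 5 : ℂ) * hEX' i
  -- ψ h = lam • h
  have hψH : ψ (b .H) = lam • b .H := by
    have key : ∀ u, b.repr (ψ (b .H) - lam • b .H) u = 0 := by
      intro u
      rcases u with _|_|_|_|i|i|⟨j,k,hjk⟩ <;>
        simp [map_sub, map_smul, Finsupp.sub_apply, Finsupp.smul_apply,
          Module.Basis.repr_self, Finsupp.single_apply, hHE, hHF, hHZ, hHX, hHY, hHS, ← hlam]
    exact sub_eq_zero.mp (coords_zero b hb _ key)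
  have hEH : b.repr (ψ (b .E)) .H = 0 := by
    rw [hHF] at hEH'; linear_combination hEH' / 4
  have hEX : ∀ i, b.repr (ψ (b .E)) (.X i) = 0 := by
    intro i; have h := hEX' i; rw [hHY i] at h; linear_combination h / 3
  have hFH : b.repr (ψ (b .F)) .H = 0 := by
    rw [hHE] at hFH'; linear_combination hFH' / 4
  have hFY : ∀ i, b.repr (ψ (b .F)) (.Y i) = 0 := by
    intro i; have h := hFY' i; rw [hHX i] at h; linear_combination h / 3
  have hψE : ψ (b .E) = lam • b .E := by
    have key : ∀ u, b.repr (ψ (b .E) - lam • b .E) u = 0 := by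
      intro u
      rcases u with _|_|_|_|i|i|⟨j,k,hjk⟩ <;>
        simp [map_sub, map_smul, Finsupp.sub_apply, Finsupp.smul_apply,
          Module.Basis.repr_self, Finsupp.single_apply, hEE, hEF, hEH, hEZ, hEX, hEY, hES]
    exact sub_eq_zero.mp (coords_zero b hb _ key)
  have hψF : ψ (b .F) = lam • b .F := by
    have key : ∀ u, b.repr (ψ (b .F) - lam • b .F) u = 0 := by
      intro u
      rcases u with _|_|_|_|i|i|⟨j,k,hjk⟩ <;>
        simp [map_sub, map_smul, Finsupp.sub_apply, Finsupp.smul_apply,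
          Module.Basis.repr_self, Finsupp.single_apply, hFE, hFF, hFH, hFZ, hFX, hFY, hFS]
    exact sub_eq_zero.mp (coords_zero b hb _ key)
  -- ψ x_i and ψ y_i, first approximation
  have hψX' : ∀ i, ψ (b (.X i)) = lam • b (.X i) + b.repr (ψ (b (.X i))) .E • b .E := by
    intro i
    have keyD : ∀ u, (2 : ℂ) * b.repr (ψ (b (.X i))) u
        = lam * b.repr (b (.X i)) u + Dg u * b.repr (ψ (b (.X i))) u := by
      intro u
      have h0 := hψ (b .H) (b (.X i))
      rw [hb.lie_h_x, hψH, smul_lie, hb.lie_h_x] at h0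
      have h1 := congrArg (fun t => b.repr t u) h0
      simp only [map_smul, map_add, Finsupp.smul_apply, Finsupp.add_apply,
        smul_eq_mul] at h1
      rw [RH b hb u] at h1
      linear_combination h1
    have kF : b.repr (ψ (b (.X i))) .F = 0 := by
      have h := keyD .F
      rw [Module.Basis.repr_self, Finsupp.single_eq_of_ne (by simp),
        show Dg (SIdx.F : SIdx n) = -2 from rfl] at h
      linear_combination h / 4
    have kH : b.repr (ψ (b (.X i))) .H = 0 := by
      have h := keyD .H
      rw [Module.Basis.repr_self, Finsupp.single_eq_of_ne (by simp),
        show Dg (SIdx.H : SIdx n) = 0 from rfl] at h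
      linear_combination h / 2
    have kZ : b.repr (ψ (b (.X i))) .Z = 0 := by
      have h := keyD .Z
      rw [Module.Basis.repr_self, Finsupp.single_eq_of_ne (by simp),
        show Dg (SIdx.Z : SIdx n) = 0 from rfl] at h
      linear_combination h / 2
    have kY : ∀ m, b.repr (ψ (b (.X i))) (.Y m) = 0 := by
      intro m
      have h := keyD (.Y m)
      rw [Module.Basis.repr_self, Finsupp.single_eq_of_ne (by simp),
        show Dg (SIdx.Y m : SIdx n) = -1 from rfl] at h
      linear_combination h / 3
    have kS : ∀ j k (hjk : j < k), b.repr (ψ (b (.X i))) (.S j k hjk) = 0 := by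
      intro j k hjk
      have h := keyD (.S j k hjk)
      rw [Module.Basis.repr_self, Finsupp.single_eq_of_ne (by simp),
        show Dg (SIdx.S j k hjk : SIdx n) = 0 from rfl] at h
      linear_combination h / 2
    have kX : ∀ m, b.repr (ψ (b (.X i))) (.X m) = if i = m then lam else 0 := by
      intro m
      have h := keyD (.X m)
      rw [show Dg (SIdx.X m : SIdx n) = 1 from rfl] at h
      by_cases hm : i = m
      · subst hm
        rw [Module.Basis.repr_self, Finsupp.single_eq_same] at h
        rw [if_pos rfl]
        linear_combination h
      · rw [Module.Basis.repr_self, Finsupp.single_eq_of_ne (by simp [Ne.symm hm])] at h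
        rw [if_neg hm]
        linear_combination h
    have key : ∀ u, b.repr (ψ (b (.X i))
        - (lam • b (.X i) + b.repr (ψ (b (.X i))) .E • b .E)) u = 0 := by
      intro u
      rcases u with _|_|_|_|m|m|⟨j,k,hjk⟩
      · simp [map_sub, map_add, map_smul, Module.Basis.repr_self, Finsupp.single_apply]
      · simp [map_sub, map_add, map_smul, Module.Basis.repr_self, Finsupp.single_apply, kF]
      · simp [map_sub, map_add, map_smul, Module.Basis.repr_self, Finsupp.single_apply, kH]
      · simp [map_sub, map_add, map_smul, Module.Basis.repr_self, Finsupp.single_apply, kZ]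
      · by_cases hm : i = m
        · subst hm
          simp [map_sub, map_add, map_smul, Module.Basis.repr_self, Finsupp.single_apply, kX]
        · simp [map_sub, map_add, map_smul, Module.Basis.repr_self, Finsupp.single_apply,
            kX, hm]
      · simp [map_sub, map_add, map_smul, Module.Basis.repr_self, Finsupp.single_apply, kY]
      · simp [map_sub, map_add, map_smul, Module.Basis.repr_self, Finsupp.single_apply, kS]
    exact sub_eq_zero.mp (coords_zero b hb _ key)
  have hψY' : ∀ i, ψ (b (.Y i)) = lam • b (.Y i) + b.repr (ψ (b (.Y i))) .F • b .F := by
    intro i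
    have keyD : ∀ u, (2 : ℂ) * b.repr (ψ (b (.Y i))) u
        = lam * b.repr (b (.Y i)) u - Dg u * b.repr (ψ (b (.Y i))) u := by
      intro u
      have h0 := hψ (b .H) (b (.Y i))
      rw [hb.lie_h_y, hψH, smul_lie, hb.lie_h_y, map_neg] at h0
      have h1 := congrArg (fun t => b.repr t u) h0
      simp only [map_smul, map_add, map_neg, smul_neg, Finsupp.smul_apply,
        Finsupp.add_apply, Finsupp.neg_apply, smul_eq_mul] at h1
      rw [RH b hb u] at h1
      linear_combination -h1
    have kE : b.repr (ψ (b (.Y i))) .E = 0 := by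
      have h := keyD .E
      rw [Module.Basis.repr_self, Finsupp.single_eq_of_ne (by simp),
        show Dg (SIdx.E : SIdx n) = 2 from rfl] at h
      linear_combination h / 4
    have kH : b.repr (ψ (b (.Y i))) .H = 0 := by
      have h := keyD .H
      rw [Module.Basis.repr_self, Finsupp.single_eq_of_ne (by simp),
        show Dg (SIdx.H : SIdx n) = 0 from rfl] at h
      linear_combination h / 2
    have kZ : b.repr (ψ (b (.Y i))) .Z = 0 := by
      have h := keyD .Z
      rw [Module.Basis.repr_self, Finsupp.single_eq_of_ne (by simp),
        show Dg (SIdx.Z : SIdx n) = 0 from rfl] at h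
      linear_combination h / 2
    have kX : ∀ m, b.repr (ψ (b (.Y i))) (.X m) = 0 := by
      intro m
      have h := keyD (.X m)
      rw [Module.Basis.repr_self, Finsupp.single_eq_of_ne (by simp),
        show Dg (SIdx.X m : SIdx n) = 1 from rfl] at h
      linear_combination h / 3
    have kS : ∀ j k (hjk : j < k), b.repr (ψ (b (.Y i))) (.S j k hjk) = 0 := by
      intro j k hjk
      have h := keyD (.S j k hjk)
      rw [Module.Basis.repr_self, Finsupp.single_eq_of_ne (by simp),
        show Dg (SIdx.S j k hjk : SIdx n) = 0 from rfl] at h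
      linear_combination h / 2
    have kY : ∀ m, b.repr (ψ (b (.Y i))) (.Y m) = if i = m then lam else 0 := by
      intro m
      have h := keyD (.Y m)
      rw [show Dg (SIdx.Y m : SIdx n) = -1 from rfl] at h
      by_cases hm : i = m
      · subst hm
        rw [Module.Basis.repr_self, Finsupp.single_eq_same] at h
        rw [if_pos rfl]
        linear_combination h
      · rw [Module.Basis.repr_self, Finsupp.single_eq_of_ne (by simp [Ne.symm hm])] at h
        rw [if_neg hm]
        linear_combination h
    have key : ∀ u, b.repr (ψ (b (.Y i))
        - (lam • b (.Y i) + b.repr (ψ (b (.Y i))) .F • b .F)) u = 0 := by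
      intro u
      rcases u with _|_|_|_|m|m|⟨j,k,hjk⟩
      · simp [map_sub, map_add, map_smul, Module.Basis.repr_self, Finsupp.single_apply, kE]
      · simp [map_sub, map_add, map_smul, Module.Basis.repr_self, Finsupp.single_apply]
      · simp [map_sub, map_add, map_smul, Module.Basis.repr_self, Finsupp.single_apply, kH]
      · simp [map_sub, map_add, map_smul, Module.Basis.repr_self, Finsupp.single_apply, kZ]
      · simp [map_sub, map_add, map_smul, Module.Basis.repr_self, Finsupp.single_apply, kX]
      · by_cases hm : i = m
        · subst hm
          simp [map_sub, map_add, map_smul, Module.Basis.repr_self, Finsupp.single_apply, kY]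
        · simp [map_sub, map_add, map_smul, Module.Basis.repr_self, Finsupp.single_apply,
            kY, hm]
      · simp [map_sub, map_add, map_smul, Module.Basis.repr_self, Finsupp.single_apply, kS]
    exact sub_eq_zero.mp (coords_zero b hb _ key)
  -- kill the extra coefficients
  have hψX : ∀ i, ψ (b (.X i)) = lam • b (.X i) := by
    intro i
    have h0 := hψ (b .E) (b (.Y i))
    rw [hb.lie_e_y, hψE, hψX' i, hψY' i, smul_lie, hb.lie_e_y, lie_add, lie_smul,
      lie_smul, hb.lie_e_y, hb.lie_e_f] at h0
    have hE := congrArg (fun t => b.repr t SIdx.E) h0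
    have hH := congrArg (fun t => b.repr t SIdx.H) h0
    simp only [map_smul, map_add, Finsupp.smul_apply, Finsupp.add_apply, smul_eq_mul,
      Module.Basis.repr_self, Finsupp.single_apply, reduceCtorEq, if_false, mul_zero,
      mul_one, add_zero, zero_add, if_pos] at hE hH
    rw [hψX' i]
    have : b.repr (ψ (b (.X i))) SIdx.E = 0 := by linear_combination hE / 2
    rw [this, zero_smul, add_zero]
  have hψY : ∀ i, ψ (b (.Y i)) = lam • b (.Y i) := by
    intro i
    have h0 := hψ (b .E) (b (.Y i))
    rw [hb.lie_e_y, hψE, hψX' i, hψY' i, smul_lie, hb.lie_e_y, lie_add, lie_smul,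
      lie_smul, hb.lie_e_y, hb.lie_e_f] at h0
    have hH := congrArg (fun t => b.repr t SIdx.H) h0
    simp only [map_smul, map_add, Finsupp.smul_apply, Finsupp.add_apply, smul_eq_mul,
      Module.Basis.repr_self, Finsupp.single_apply, reduceCtorEq, if_false, mul_zero,
      mul_one, add_zero, zero_add, if_pos] at hH
    rw [hψY' i]
    have : b.repr (ψ (b (.Y i))) SIdx.F = 0 := by linear_combination -hH
    rw [this, zero_smul, add_zero]
  -- ψ z = lam • z
  have hψZ : ψ (b .Z) = lam • b .Z := by
    obtain ⟨i0⟩ : Nonempty (Fin n) := ⟨⟨0, hn⟩⟩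
    have h0 := hψ (b (.X i0)) (b (.Y i0))
    rw [hb.lie_x_y, kd_self, one_smul, hψX i0, hψY i0, smul_lie, lie_smul,
      hb.lie_x_y, kd_self, one_smul] at h0
    have h1 := congrArg (fun t => ((2 : ℂ)⁻¹) • t) h0
    simp only [smul_smul] at h1
    norm_num at h1
    rw [h1]
    module
  exact ⟨hψE, hψF, hψH, hψZ, hψX, hψY⟩

lemma mul_s_z (mul : L →ₗ[ℂ] L →ₗ[ℂ] L)
    (hcompat : ∀ x y w : L, (2 : ℂ) • mul w ⁅x, y⁆ = ⁅mul w x, y⁆ + ⁅x, mul w y⁆)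
    (w : L)
    (me : mul w (b .E) = 0) (mf : mul w (b .F) = 0)
    (mx : ∀ i, mul w (b (.X i)) = 0)
    (j k : Fin n) (hjk : j < k) :
    mul w (b (.S j k hjk)) = b.repr (mul w (b (.S j k hjk))) .Z • b .Z := by
  apply cent b hb
  · have h0 := hcompat (b .E) (b (.S j k hjk)) w
    rw [bES b hb j k hjk, map_zero, smul_zero, me, zero_lie] at h0
    simpa using h0.symm
  · have h0 := hcompat (b .F) (b (.S j k hjk)) w
    rw [bFS b hb j k hjk, map_zero, smul_zero, mf, zero_lie] at h0
    simpa using h0.symm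
  · intro i
    have h0 := hcompat (b (.S j k hjk)) (b (.X i)) w
    rw [← sg_eq b hjk, hb.lie_s_x, map_sub, map_smul, map_smul, mx i, mx j, mx k,
      lie_zero, smul_zero, smul_zero, sub_zero, smul_zero, add_zero] at h0
    rw [← lie_skew, ← sg_eq b hjk, ← h0, neg_zero]

end Aux


/-- For every `n ≥ 1` with `n ≠ 2`, every transposed Poisson
structure on the Schrödinger algebra `S_n` is trivial: every commutative
associative multiplication `·` satisfying `2 w·[x,y] = [w·x, y] + [x, w·y]`
is identically zero. -/
theorem transposed_poisson_trivial_schrodinger (n : ℕ) (hn : 1 ≤ n) (hne : n ≠ 2)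
    (L : Type*) [LieRing L] [LieAlgebra ℂ L]
    (b : Module.Basis (SIdx n) ℂ L) (hb : IsSchrodinger b)
    (mul : L →ₗ[ℂ] L →ₗ[ℂ] L)
    (hcomm : ∀ x y : L, mul x y = mul y x)
    (hassoc : ∀ x y w : L, mul (mul x y) w = mul x (mul y w))
    (hcompat : ∀ x y w : L, (2 : ℂ) • mul w ⁅x, y⁆ = ⁅mul w x, y⁆ + ⁅x, mul w y⁆) :
    ∀ x y : L, mul x y = 0 := by
  have hM := fun w : L => half_deriv_struct b hb hn (mul w) (fun x y => hcompat x y w)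
  -- vanishing of the scalars
  have hE0 : b.repr (mul (b .E) (b .H)) .H = 0 := by
    have h3 : (b.repr (mul (b .E) (b .H)) .H) • b .H
        = (b.repr (mul (b .H) (b .H)) .H) • b .E := by
      rw [← (hM (b .E)).2.2.1, ← (hM (b .H)).1, hcomm]
    have h4 := congrArg (fun t => b.repr t SIdx.H) h3
    simpa [Module.Basis.repr_self, Finsupp.single_apply] using h4
  have hH0 : b.repr (mul (b .H) (b .H)) .H = 0 := by
    have h3 : (b.repr (mul (b .E) (b .H)) .H) • b .H
        = (b.repr (mul (b .H) (b .H)) .H) • b .E := by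
      rw [← (hM (b .E)).2.2.1, ← (hM (b .H)).1, hcomm]
    have h4 := congrArg (fun t => b.repr t SIdx.E) h3
    simpa [Module.Basis.repr_self, Finsupp.single_apply] using h4.symm
  have hF0 : b.repr (mul (b .F) (b .H)) .H = 0 := by
    have h3 : (b.repr (mul (b .F) (b .H)) .H) • b .H
        = (b.repr (mul (b .H) (b .H)) .H) • b .F := by
      rw [← (hM (b .F)).2.2.1, ← (hM (b .H)).2.1, hcomm]
    have h4 := congrArg (fun t => b.repr t SIdx.H) h3
    simpa [Module.Basis.repr_self, Finsupp.single_apply] using h4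
  have hZ0 : b.repr (mul (b .Z) (b .H)) .H = 0 := by
    have h3 : (b.repr (mul (b .Z) (b .H)) .H) • b .E
        = (b.repr (mul (b .E) (b .H)) .H) • b .Z := by
      rw [← (hM (b .Z)).1, ← (hM (b .E)).2.2.2.1, hcomm]
    have h4 := congrArg (fun t => b.repr t SIdx.E) h3
    simpa [Module.Basis.repr_self, Finsupp.single_apply] using h4
  have hX0 : ∀ i, b.repr (mul (b (.X i)) (b .H)) .H = 0 := by
    intro i
    have h3 : (b.repr (mul (b (.X i)) (b .H)) .H) • b .E
        = (b.repr (mul (b .E) (b .H)) .H) • b (.X i) := by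
      rw [← (hM (b (.X i))).1, ← (hM (b .E)).2.2.2.2.1 i, hcomm]
    have h4 := congrArg (fun t => b.repr t SIdx.E) h3
    simpa [Module.Basis.repr_self, Finsupp.single_apply] using h4
  have hY0 : ∀ i, b.repr (mul (b (.Y i)) (b .H)) .H = 0 := by
    intro i
    have h3 : (b.repr (mul (b (.Y i)) (b .H)) .H) • b .E
        = (b.repr (mul (b .E) (b .H)) .H) • b (.Y i) := by
      rw [← (hM (b (.Y i))).1, ← (hM (b .E)).2.2.2.2.2 i, hcomm]
    have h4 := congrArg (fun t => b.repr t SIdx.E) h3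
    simpa [Module.Basis.repr_self, Finsupp.single_apply] using h4
  -- products with e,f,x vanish for suitable w
  have mket : ∀ w, b.repr (mul w (b .H)) .H = 0 →
      mul w (b .E) = 0 ∧ mul w (b .F) = 0 ∧ (∀ i, mul w (b (.X i)) = 0) := by
    intro w hw
    obtain ⟨me, mf, mh, mz, mx, my⟩ := hM w
    rw [hw, zero_smul] at me mf
    simp only [hw, zero_smul] at mx
    exact ⟨me, mf, mx⟩
  have hSz : ∀ w, b.repr (mul w (b .H)) .H = 0 → ∀ j k (hjk : j < k),
      mul w (b (.S j k hjk)) = b.repr (mul w (b (.S j k hjk))) .Z • b .Z := by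
    intro w hw j k hjk
    obtain ⟨me, mf, mx⟩ := mket w hw
    exact mul_s_z b hb mul hcompat w me mf mx j k hjk
  have hS0 : ∀ j k (hjk : j < k), b.repr (mul (b (.S j k hjk)) (b .H)) .H = 0 := by
    intro j k hjk
    have h2 := hSz (b .E) hE0 j k hjk
    have h3 : (b.repr (mul (b (.S j k hjk)) (b .H)) .H) • b .E
        = b.repr (mul (b .E) (b (.S j k hjk))) .Z • b .Z := by
      rw [← (hM (b (.S j k hjk))).1, ← h2, hcomm]
    have h4 := congrArg (fun t => b.repr t SIdx.E) h3
    simpa [Module.Basis.repr_self, Finsupp.single_apply] using h4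
  have ΛU : ∀ u, b.repr (mul (b u) (b .H)) .H = 0 := by
    intro u
    rcases u with _|_|_|_|i|i|⟨j,k,hjk⟩
    exacts [hE0, hF0, hH0, hZ0, hX0 i, hY0 i, hS0 j k hjk]
  have key : ∀ u u', mul (b u) (b u') = 0 := by
    intro u u'
    rcases u' with _|_|_|_|i|i|⟨l,m,hlm⟩
    · rw [(hM (b u)).1, ΛU u, zero_smul]
    · rw [(hM (b u)).2.1, ΛU u, zero_smul]
    · rw [(hM (b u)).2.2.1, ΛU u, zero_smul]
    · rw [(hM (b u)).2.2.2.1, ΛU u, zero_smul]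
    · rw [(hM (b u)).2.2.2.2.1 i, ΛU u, zero_smul]
    · rw [(hM (b u)).2.2.2.2.2 i, ΛU u, zero_smul]
    · rcases u with _|_|_|_|i|i|⟨j,k,hjk⟩
      · rw [hcomm, (hM _).1, ΛU, zero_smul]
      · rw [hcomm, (hM _).2.1, ΛU, zero_smul]
      · rw [hcomm, (hM _).2.2.1, ΛU, zero_smul]
      · rw [hcomm, (hM _).2.2.2.1, ΛU, zero_smul]
      · rw [hcomm, (hM _).2.2.2.2.1 i, ΛU, zero_smul]
      · rw [hcomm, (hM _).2.2.2.2.2 i, ΛU, zero_smul]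
      · -- both S : use n ≥ 3
        have hn3 : 3 ≤ n := by
          have h1 := m.isLt
          have h2 : (l : ℕ) < (m : ℕ) := hlm
          omega
        obtain ⟨p, hpl, hpm⟩ : ∃ p : Fin n, p ≠ l ∧ p ≠ m := by
          by_cases h1 : (l : ℕ) = 0
          · by_cases h2 : (m : ℕ) = 1
            · exact ⟨⟨2, by omega⟩, by simp [Fin.ext_iff]; omega, by simp [Fin.ext_iff]; omega⟩
            · exact ⟨⟨1, by omega⟩, by simp [Fin.ext_iff]; omega, by simp [Fin.ext_iff]; omega⟩
          · by_cases h2 : (m : ℕ) = 0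
            · by_cases h3 : (l : ℕ) = 1
              · exact ⟨⟨2, by omega⟩, by simp [Fin.ext_iff]; omega, by simp [Fin.ext_iff]; omega⟩
              · exact ⟨⟨1, by omega⟩, by simp [Fin.ext_iff]; omega, by simp [Fin.ext_iff]; omega⟩
            · exact ⟨⟨0, by omega⟩, by simp [Fin.ext_iff]; omega, by simp [Fin.ext_iff]; omega⟩
        have hbr : ⁅sg b l p, sg b p m⁆ = b (.S l m hlm) := by
          rw [hb.lie_s_s l p p m, kd_self, kd_ne (Fin.ne_of_lt hlm), kd_ne (Ne.symm hpm),
            kd_ne hpl, one_smul, zero_smul, zero_smul, zero_smul, add_zero, add_zero,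
            add_zero, sg_eq b hlm]
        obtain ⟨γ1, hγ1⟩ : ∃ γ : ℂ, mul (b (.S j k hjk)) (sg b l p) = γ • b .Z := by
          rcases lt_trichotomy l p with h | h | h
          · exact ⟨_, by rw [sg_eq b h]; exact hSz _ (hS0 j k hjk) l p h⟩
          · exact absurd h.symm hpl
          · refine ⟨-(b.repr (mul (b (.S j k hjk)) (b (.S p l h))) .Z), ?_⟩
            rw [sg_swap b h, map_neg, neg_smul, neg_inj]
            exact hSz _ (hS0 j k hjk) p l h
        obtain ⟨γ2, hγ2⟩ : ∃ γ : ℂ, mul (b (.S j k hjk)) (sg b p m) = γ • b .Z := by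
          rcases lt_trichotomy p m with h | h | h
          · exact ⟨_, by rw [sg_eq b h]; exact hSz _ (hS0 j k hjk) p m h⟩
          · exact absurd h hpm
          · refine ⟨-(b.repr (mul (b (.S j k hjk)) (b (.S m p h))) .Z), ?_⟩
            rw [sg_swap b h, map_neg, neg_smul, neg_inj]
            exact hSz _ (hS0 j k hjk) m p h
        have h0 := hcompat (sg b l p) (sg b p m) (b (.S j k hjk))
        rw [hbr, hγ1, hγ2, smul_lie, lie_smul, zSg b hb, sgZ b hb, smul_zero, smul_zero,
          add_zero] at h0
        have h5 := congrArg (fun t => ((2 : ℂ)⁻¹) • t) h0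
        simp only [smul_smul, smul_zero] at h5
        norm_num at h5
        exact h5
  have hmul0 : mul = 0 := Module.Basis.ext b fun u => Module.Basis.ext b fun u' => by
    simpa using key u u'
  intro x y
  rw [hmul0]
  rfl
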